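/- In a residuated lattice, for any subset X of A, the filter generated by X equals the intersection of all X-minimal prime filters. -/
import Mathlib

universe u

class ResiduatedLattice (A : Type u) extends Lattice A, BoundedOrder A where
  mul : A → A → A
  himp : A → A → A
  mul_comm : ∀ x y : A, mul x y = mul y x
  mul_assoc : ∀ x y z : A, mul (mul x y) z = mul x (mul y z)
  mul_top : ∀ x : A, mul x ⊤ = x
  adjoint : ∀ x y z : A, mul x y ≤ z ↔ x ≤ himp y z

namespace RL

variable {A : Type u} [ResiduatedLattice A]

/-- A filter: a nonempty subset closed under the monoid operation `⊙` and closed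
under joins with arbitrary elements. -/
def IsFilter (F : Set A) : Prop :=
  F.Nonempty ∧ (∀ x ∈ F, ∀ y ∈ F, ResiduatedLattice.mul x y ∈ F) ∧
    (∀ x ∈ F, ∀ y : A, x ⊔ y ∈ F)

/-- A prime filter: a proper filter such that `x ⊔ y ∈ P` implies `x ∈ P` or `y ∈ P`. -/
def IsPrime (P : Set A) : Prop :=
  IsFilter P ∧ P ≠ Set.univ ∧ ∀ x y : A, x ⊔ y ∈ P → x ∈ P ∨ y ∈ P

/-- The filter generated by a subset `X`. -/
def Fgen (X : Set A) : Set A := ⋂₀ {G : Set A | IsFilter G ∧ X ⊆ G}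

/-- An `X`-minimal prime filter: a minimal element of the set of prime filters containing `X`. -/
def MinPrimeOver (X : Set A) (P : Set A) : Prop :=
  IsPrime P ∧ X ⊆ P ∧ ∀ Q : Set A, IsPrime Q → X ⊆ Q → Q ⊆ P → Q = P

/-- A minimal prime filter. -/
def MinPrime (P : Set A) : Prop :=
  IsPrime P ∧ ∀ Q : Set A, IsPrime Q → Q ⊆ P → Q = P

/-- The coannihilator of `X` belonging to `F`. -/
def coann (F : Set A) (X : Set A) : Set A := {a : A | ∀ x ∈ X, x ⊔ a ∈ F}

/-- `X^⊥ = {a | x ⊔ a = ⊤ for all x ∈ X}`. -/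
def perp (X : Set A) : Set A := {a : A | ∀ x ∈ X, x ⊔ a = ⊤}

/-- `D_F(P) = {a | (F : a) ⊄ P}`. -/
def DF (F P : Set A) : Set A := {a : A | ¬ coann F {a} ⊆ P}

/-- A `∨`-closed subset: nonempty and closed under joins. -/
def VClosed (C : Set A) : Prop := C.Nonempty ∧ ∀ x ∈ C, ∀ y ∈ C, x ⊔ y ∈ C

end RL

namespace RLAux

open RL

local infixl:70 " ⊙ " => ResiduatedLattice.mul

variable {A : Type u} [ResiduatedLattice A]

theorem mul_le_mul_left {x x' : A} (h : x ≤ x') (y : A) : x ⊙ y ≤ x' ⊙ y := by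
  have := (ResiduatedLattice.adjoint x' y (x' ⊙ y)).mp le_rfl
  exact (ResiduatedLattice.adjoint x y (x' ⊙ y)).mpr (le_trans h this)

theorem mul_le_mul_right (x : A) {y y' : A} (h : y ≤ y') : x ⊙ y ≤ x ⊙ y' := by
  rw [ResiduatedLattice.mul_comm x y, ResiduatedLattice.mul_comm x y']
  exact mul_le_mul_left h x

theorem mul_le_mul' {x x' y y' : A} (hx : x ≤ x') (hy : y ≤ y') : x ⊙ y ≤ x' ⊙ y' :=
  le_trans (mul_le_mul_left hx y) (mul_le_mul_right x' hy)

theorem mul_le_left' (x y : A) : x ⊙ y ≤ x := by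
  calc x ⊙ y ≤ x ⊙ ⊤ := mul_le_mul_right x le_top
  _ = x := ResiduatedLattice.mul_top x

theorem top_mul (x : A) : (⊤ : A) ⊙ x = x := by
  rw [ResiduatedLattice.mul_comm, ResiduatedLattice.mul_top]

theorem sup_mul (x y a : A) : (x ⊔ y) ⊙ a = x ⊙ a ⊔ y ⊙ a := by
  apply le_antisymm
  · apply (ResiduatedLattice.adjoint _ _ _).mpr
    apply sup_le
    · exact (ResiduatedLattice.adjoint _ _ _).mp le_sup_left
    · exact (ResiduatedLattice.adjoint _ _ _).mp le_sup_right
  · exact sup_le (mul_le_mul_left le_sup_left a) (mul_le_mul_left le_sup_right a)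

/-- power with pw x 0 = ⊤ -/
def pw (x : A) : ℕ → A
  | 0 => ⊤
  | n + 1 => x ⊙ pw x n

theorem filter_top_mem {F : Set A} (hF : IsFilter F) : (⊤ : A) ∈ F := by
  obtain ⟨⟨g, hg⟩, _, hsup⟩ := hF
  have := hsup g hg ⊤
  simpa using this

theorem filter_mem_of_le {F : Set A} (hF : IsFilter F) {g a : A} (hg : g ∈ F) (h : g ≤ a) :
    a ∈ F := by
  have := hF.2.2 g hg a
  rwa [sup_eq_right.mpr h] at this

theorem fgen_isFilter (X : Set A) : IsFilter (Fgen X) := by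
  refine ⟨⟨⊤, ?_⟩, ?_, ?_⟩
  · intro G hG; exact filter_top_mem hG.1
  · intro x hx y hy G hG
    exact hG.1.2.1 x (hx G hG) y (hy G hG)
  · intro x hx y G hG
    exact hG.1.2.2 x (hx G hG) y

theorem subset_fgen (X : Set A) : X ⊆ Fgen X := by
  intro x hx G hG; exact hG.2 hx

/-- extension of a filter by one element -/
def ext1 (G : Set A) (x : A) : Set A := {z : A | ∃ g ∈ G, ∃ n : ℕ, g ⊙ pw x n ≤ z}

theorem ext1_isFilter {G : Set A} (hG : IsFilter G) (x : A) : IsFilter (ext1 G x) := by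
  refine ⟨⟨⊤, ⊤, filter_top_mem hG, 0, by simp [pw, ResiduatedLattice.mul_top]⟩, ?_, ?_⟩
  · rintro z ⟨g1, hg1, n, hn⟩ w ⟨g2, hg2, m, hm⟩
    refine ⟨g1 ⊙ g2, hG.2.1 g1 hg1 g2 hg2, n + m, ?_⟩
    have key : ∀ p q : ℕ, pw x (p + q) = pw x p ⊙ pw x q := by
      intro p q
      induction p with
      | zero => simp [pw, top_mul]
      | succ k ih => simp only [pw, Nat.succ_add, ih, ResiduatedLattice.mul_assoc]
    calc (g1 ⊙ g2) ⊙ pw x (n + m) = (g1 ⊙ g2) ⊙ (pw x n ⊙ pw x m) := by rw [key]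
      _ = (g1 ⊙ pw x n) ⊙ (g2 ⊙ pw x m) := by
          rw [ResiduatedLattice.mul_assoc, ResiduatedLattice.mul_assoc]
          congr 1
          rw [← ResiduatedLattice.mul_assoc, ← ResiduatedLattice.mul_assoc,
            ResiduatedLattice.mul_comm g2 (pw x n)]
      _ ≤ z ⊙ w := mul_le_mul' hn hm
  · rintro z ⟨g, hg, n, hn⟩ y
    exact ⟨g, hg, n, le_trans hn le_sup_left⟩

theorem subset_ext1 {G : Set A} (hG : IsFilter G) (x : A) : G ⊆ ext1 G x := by
  intro g hg
  exact ⟨g, hg, 0, by simp [pw, ResiduatedLattice.mul_top]⟩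

theorem mem_ext1 {G : Set A} (hG : IsFilter G) (x : A) : x ∈ ext1 G x :=
  ⟨⊤, filter_top_mem hG, 1, by simp [pw, top_mul, ResiduatedLattice.mul_top]⟩

/-- the key combinatorial lemma -/
theorem key_lemma (x y a : A) : ∀ k p q : ℕ, p + q = k → ∀ u v : A,
    u ⊙ pw x p ≤ a → v ⊙ pw y q ≤ a → (u ⊙ v) ⊙ pw (x ⊔ y) k ≤ a := by
  intro k
  induction k with
  | zero =>
    intro p q hpq u v hu hv
    obtain ⟨rfl, rfl⟩ : p = 0 ∧ q = 0 := by omega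
    simp only [pw, ResiduatedLattice.mul_top] at *
    exact le_trans (mul_le_left' u v) hu
  | succ k ih =>
    intro p q hpq u v hu hv
    have expand : (u ⊙ v) ⊙ pw (x ⊔ y) (k + 1)
        = ((u ⊙ v) ⊙ x) ⊙ pw (x ⊔ y) k ⊔ ((u ⊙ v) ⊙ y) ⊙ pw (x ⊔ y) k := by
      show (u ⊙ v) ⊙ ((x ⊔ y) ⊙ pw (x ⊔ y) k) = _
      rw [← ResiduatedLattice.mul_assoc, ResiduatedLattice.mul_comm (u ⊙ v) (x ⊔ y),
        sup_mul, sup_mul]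
      rw [ResiduatedLattice.mul_comm x (u ⊙ v), ResiduatedLattice.mul_comm y (u ⊙ v)]
    rw [expand]
    apply sup_le
    · -- x branch
      rcases Nat.eq_zero_or_pos p with hp | hp
      · subst hp
        simp only [pw, ResiduatedLattice.mul_top] at hu
        calc ((u ⊙ v) ⊙ x) ⊙ pw (x ⊔ y) k ≤ (u ⊙ v) ⊙ x := mul_le_left' _ _
          _ ≤ u ⊙ v := mul_le_left' _ _
          _ ≤ u := mul_le_left' _ _
          _ ≤ a := hu
      · obtain ⟨p', rfl⟩ : ∃ p', p = p' + 1 := ⟨p - 1, by omega⟩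
        have hu' : (u ⊙ x) ⊙ pw x p' ≤ a := by
          rw [ResiduatedLattice.mul_assoc]; exact hu
        have := ih p' q (by omega) (u ⊙ x) v hu' hv
        calc ((u ⊙ v) ⊙ x) ⊙ pw (x ⊔ y) k = ((u ⊙ x) ⊙ v) ⊙ pw (x ⊔ y) k := by
              rw [ResiduatedLattice.mul_assoc u v x, ResiduatedLattice.mul_assoc u x v,
                ResiduatedLattice.mul_comm v x]
          _ ≤ a := this
    · -- y branch
      rcases Nat.eq_zero_or_pos q with hq | hq
      · subst hq
        simp only [pw, ResiduatedLattice.mul_top] at hv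
        calc ((u ⊙ v) ⊙ y) ⊙ pw (x ⊔ y) k ≤ (u ⊙ v) ⊙ y := mul_le_left' _ _
          _ ≤ u ⊙ v := mul_le_left' _ _
          _ ≤ v := by rw [ResiduatedLattice.mul_comm]; exact mul_le_left' _ _
          _ ≤ a := hv
      · obtain ⟨q', rfl⟩ : ∃ q', q = q' + 1 := ⟨q - 1, by omega⟩
        have hv' : (v ⊙ y) ⊙ pw y q' ≤ a := by
          rw [ResiduatedLattice.mul_assoc]; exact hv
        have := ih p q' (by omega) u (v ⊙ y) hu hv'
        calc ((u ⊙ v) ⊙ y) ⊙ pw (x ⊔ y) k = (u ⊙ (v ⊙ y)) ⊙ pw (x ⊔ y) k := by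
              rw [ResiduatedLattice.mul_assoc u v y]
          _ ≤ a := this

theorem pw_mem {G : Set A} (hG : IsFilter G) {x : A} (hx : x ∈ G) (n : ℕ) : pw x n ∈ G := by
  induction n with
  | zero => exact filter_top_mem hG
  | succ k ih => exact hG.2.1 x hx _ ih

/-- step 1: maximal filter avoiding a, containing F, is prime -/
theorem exists_prime_avoiding {F : Set A} (hF : IsFilter F) {a : A} (ha : a ∉ F) :
    ∃ P : Set A, IsPrime P ∧ F ⊆ P ∧ a ∉ P := by
  set S : Set (Set A) := {G | IsFilter G ∧ F ⊆ G ∧ a ∉ G} with hS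
  have hchaincond : ∀ c ⊆ S, IsChain (· ⊆ ·) c → c.Nonempty →
      ∃ ub ∈ S, ∀ s ∈ c, s ⊆ ub := by
    intro c hcS hchain hcne
    refine ⟨⋃₀ c, ?_, fun s hs => Set.subset_sUnion_of_mem hs⟩
    simp only [hS, Set.mem_setOf_eq]
    refine ⟨⟨⟨⊤, ?_⟩, ?_, ?_⟩, ?_, ?_⟩
    · obtain ⟨G, hG⟩ := hcne
      exact ⟨G, hG, filter_top_mem (hcS hG).1⟩
    · rintro z ⟨G1, hG1, hz⟩ w ⟨G2, hG2, hw⟩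
      rcases hchain.total hG1 hG2 with h | h
      · exact ⟨G2, hG2, (hcS hG2).1.2.1 z (h hz) w hw⟩
      · exact ⟨G1, hG1, (hcS hG1).1.2.1 z hz w (h hw)⟩
    · rintro z ⟨G1, hG1, hz⟩ w
      exact ⟨G1, hG1, (hcS hG1).1.2.2 z hz w⟩
    · obtain ⟨G, hG⟩ := hcne
      exact le_trans (hcS hG).2.1 (Set.subset_sUnion_of_mem hG)
    · rintro ⟨G1, hG1, hz⟩
      exact (hcS hG1).2.2 hz
  obtain ⟨G, hFG, hGS, hGmax⟩ :=
    zorn_subset_nonempty S hchaincond F ⟨hF, Set.Subset.refl F, ha⟩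
  refine ⟨G, ⟨hGS.1, ?_, ?_⟩, hGS.2.1, hGS.2.2⟩
  · intro h; exact hGS.2.2 (h ▸ Set.mem_univ a)
  · intro x y hxy
    by_contra hcon
    push_neg at hcon
    obtain ⟨hx, hy⟩ := hcon
    have hGx : a ∈ ext1 G x := by
      by_contra haGx
      have hmem : ext1 G x ∈ S := ⟨ext1_isFilter hGS.1 x,
        le_trans hGS.2.1 (subset_ext1 hGS.1 x), haGx⟩
      have := hGmax hmem (subset_ext1 hGS.1 x)
      exact hx (this (mem_ext1 hGS.1 x))
    have hGy : a ∈ ext1 G y := by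
      by_contra haGy
      have hmem : ext1 G y ∈ S := ⟨ext1_isFilter hGS.1 y,
        le_trans hGS.2.1 (subset_ext1 hGS.1 y), haGy⟩
      have := hGmax hmem (subset_ext1 hGS.1 y)
      exact hy (this (mem_ext1 hGS.1 y))
    obtain ⟨g1, hg1, n, hn⟩ := hGx
    obtain ⟨g2, hg2, m, hm⟩ := hGy
    have hkey := key_lemma x y a (n + m) n m rfl g1 g2 hn hm
    have hmem : (g1 ⊙ g2) ⊙ pw (x ⊔ y) (n + m) ∈ G :=
      hGS.1.2.1 _ (hGS.1.2.1 g1 hg1 g2 hg2) _ (pw_mem hGS.1 hxy (n + m))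
    exact hGS.2.2 (filter_mem_of_le hGS.1 hmem hkey)

/-- step 2: any prime containing X contains an X-minimal prime -/
theorem exists_minPrimeOver {X P : Set A} (hP : IsPrime P) (hXP : X ⊆ P) :
    ∃ Q : Set A, MinPrimeOver X Q ∧ Q ⊆ P := by
  set S : Set (Set A) := {Q | IsPrime Q ∧ X ⊆ Q ∧ Q ⊆ P} with hS
  have hchaincond : ∀ c ⊆ S, IsChain (· ⊆ ·) c → c.Nonempty →
      ∃ lb ∈ S, ∀ s ∈ c, lb ⊆ s := by
    intro c hcS hchain hcne
    refine ⟨⋂₀ c, ?_, fun s hs => Set.sInter_subset_of_mem hs⟩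
    simp only [hS, Set.mem_setOf_eq]
    refine ⟨⟨⟨⟨⊤, ?_⟩, ?_, ?_⟩, ?_, ?_⟩, ?_, ?_⟩
    · intro G hG; exact filter_top_mem (hcS hG).1.1
    · intro z hz w hw G hG
      exact (hcS hG).1.1.2.1 z (hz G hG) w (hw G hG)
    · intro z hz w G hG
      exact (hcS hG).1.1.2.2 z (hz G hG) w
    · -- proper
      obtain ⟨G, hG⟩ := hcne
      intro h
      apply (hcS hG).1.2.1
      apply Set.eq_univ_of_univ_subset
      intro z _
      exact (h ▸ Set.mem_univ z : z ∈ ⋂₀ c) G hG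
    · -- prime
      intro z w hzw
      by_contra hcon
      push_neg at hcon
      obtain ⟨hz, hw⟩ := hcon
      simp only [Set.mem_sInter, not_forall, exists_prop] at hz hw
      obtain ⟨G1, hG1, hz1⟩ := hz
      obtain ⟨G2, hG2, hw2⟩ := hw
      rcases hchain.total hG1 hG2 with h | h
      · rcases (hcS hG1).1.2.2 z w (hzw G1 hG1) with h' | h'
        · exact hz1 h'
        · exact hw2 (h h')
      · rcases (hcS hG2).1.2.2 z w (hzw G2 hG2) with h' | h'
        · exact hz1 (h h')
        · exact hw2 h'
    · intro x hx G' hG'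
      exact (hcS hG').2.1 hx
    · obtain ⟨G, hG⟩ := hcne
      exact le_trans (Set.sInter_subset_of_mem hG) (hcS hG).2.2
  obtain ⟨Q, hQP, hQS, hQmin⟩ :=
    zorn_superset_nonempty S hchaincond P ⟨hP, hXP, Set.Subset.refl P⟩
  refine ⟨Q, ⟨hQS.1, hQS.2.1, ?_⟩, hQS.2.2⟩
  intro R hR hXR hRQ
  have hmem : R ∈ S := ⟨hR, hXR, le_trans hRQ hQS.2.2⟩
  exact le_antisymm hRQ (hQmin hmem hRQ)

end RLAux

theorem fgen_eq_sInter_minimal_primes {A : Type u} [ResiduatedLattice A] (X : Set A) :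
    RL.Fgen X = ⋂₀ {m : Set A | RL.MinPrimeOver X m} := by
  apply Set.Subset.antisymm
  · intro a ha m hm
    exact ha m ⟨hm.1.1, hm.2.1⟩
  · intro a ha
    by_contra haF
    obtain ⟨P, hP, hFP, haP⟩ := RLAux.exists_prime_avoiding (RLAux.fgen_isFilter X) haF
    obtain ⟨Q, hQ, hQP⟩ := RLAux.exists_minPrimeOver hP
      (le_trans (RLAux.subset_fgen X) hFP)
    exact haP (hQP (ha Q hQ))
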